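/- For all real k ≠ 0 and δ > 0, both roots of the quadratic λ² + (k² + δk² + k⁴/3)λ + (1/12)k⁶ + (1/3)δk⁶ = 0 are real and strictly negative. -/
import Mathlib


/-- For all real k ≠ 0 and δ > 0, both roots of the quadratic
λ² + (k² + δk² + k⁴/3)λ + (1/12)k⁶ + (1/3)δk⁶ = 0 are real and strictly negative. -/
theorem stmt0 (k δ : ℝ) (hk : k ≠ 0) (hδ : 0 < δ) (z : ℂ)
    (hz : z ^ 2 + ((k ^ 2 + δ * k ^ 2 + k ^ 4 / 3 : ℝ) : ℂ) * z
        + (((1 / 12) * k ^ 6 + (1 / 3) * δ * k ^ 6 : ℝ) : ℂ) = 0) :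
    z.im = 0 ∧ z.re < 0 := by
  set b : ℝ := k ^ 2 + δ * k ^ 2 + k ^ 4 / 3 with hbdef
  set c : ℝ := (1 / 12) * k ^ 6 + (1 / 3) * δ * k ^ 6 with hcdef
  have hk2 : 0 < k ^ 2 := by positivity
  have hk4 : 0 < k ^ 4 := by positivity
  have hb : 0 < b := by rw [hbdef]; positivity
  have hc : 0 < c := by rw [hcdef]; positivity
  have hdisc : 4 * c < b ^ 2 := by
    rw [hbdef, hcdef]
    nlinarith [sq_nonneg (k ^ 4 / 3 + k ^ 2 * (1 - 2 * δ) / 2), mul_pos hk4 hδ, hk4]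
  set x := z.re with hx
  set y := z.im with hy
  rw [Complex.ext_iff] at hz
  simp [pow_two, Complex.mul_re, Complex.mul_im] at hz
  obtain ⟨hre, him⟩ := hz
  have hre' : x * x - y * y + b * x + c = 0 := by linarith
  have him' : y * (2 * x + b) = 0 := by linarith
  have hy0 : y = 0 := by
    rcases mul_eq_zero.mp him' with h | h
    · exact h
    · exfalso
      nlinarith [sq_nonneg y, sq_nonneg (2 * x + b), mul_self_nonneg y, h, hre', hdisc]
  refine ⟨hy0, ?_⟩
  rw [hy0] at hre'
  nlinarith [sq_nonneg x]
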